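/- Let q be a prime power, d1, d2 positive integers, c = gcd(d1, d2), q1 = q^{d1}, q2 = q^{d2}. For m ≥ 1 set M_m = (q1^m - 1)/(q^{cm} - 1). Then for any positive integer n, the number of pairs (x, y) with x ∈ F_{q1^m}, y ∈ F_{q2^m}, and y = x^n equals gcd(n, M_m)·(q^{cm} - 1) + 1. -/

import Mathlib

open Finset Polynomial

private lemma nat_geom_sum (x k : ℕ) (hx : 1 ≤ x) :
    (x - 1) * (∑ i ∈ Finset.range k, x ^ i) = x ^ k - 1 := by
  have h1 : (1 : ℕ) ≤ x ^ k := Nat.one_le_pow _ _ hx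
  zify [hx, h1]
  linear_combination geom_sum_mul (x : ℤ) k

private lemma mem_subfield_iff_pow {L : Type*} [Field L] [Fintype L] (K : Subfield L) (x : L) :
    x ∈ K ↔ x ^ (Nat.card K) = x := by
  classical
  rw [Nat.card_eq_fintype_card]
  set Q := Fintype.card K with hQdef
  have hQ1 : 1 < Q := Fintype.one_lt_card
  constructor
  · intro hx
    have h := FiniteField.pow_card (⟨x, hx⟩ : K)
    have h2 := congrArg Subtype.val h
    simpa using h2
  · intro hx
    set T : Finset L := Finset.univ.filter (fun y => y ^ Q = y) with hT
    have hxT : x ∈ T := by simp [hT, hx]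
    have himg : (Finset.univ : Finset K).image (Subtype.val) ⊆ T := by
      intro y hy
      simp only [Finset.mem_image] at hy
      obtain ⟨z, _, rfl⟩ := hy
      have h := FiniteField.pow_card z
      simp only [hT, Finset.mem_filter, Finset.mem_univ, true_and]
      simpa using congrArg Subtype.val h
    have hTcard : T.card ≤ Q := by
      have hsub : T ⊆ (X ^ Q - X : L[X]).roots.toFinset := by
        intro y hy
        simp only [hT, Finset.mem_filter] at hy
        rw [Multiset.mem_toFinset, Polynomial.mem_roots
          (FiniteField.X_pow_card_sub_X_ne_zero L hQ1)]
        simp [Polynomial.IsRoot, sub_eq_zero, hy.2]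
      calc T.card ≤ _ := Finset.card_le_card hsub
        _ ≤ Multiset.card (X ^ Q - X : L[X]).roots := Multiset.toFinset_card_le _
        _ ≤ (X ^ Q - X : L[X]).natDegree := Polynomial.card_roots' _
        _ = Q := FiniteField.X_pow_card_sub_X_natDegree_eq L hQ1
    have hcardimg : ((Finset.univ : Finset K).image Subtype.val).card = Q := by
      rw [Finset.card_image_of_injective _ Subtype.val_injective, Finset.card_univ]
    have heq : (Finset.univ : Finset K).image Subtype.val = T :=
      Finset.eq_of_subset_of_card_le himg (by rw [hcardimg]; exact hTcard)
    rw [← heq] at hxT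
    simp only [Finset.mem_image] at hxT
    obtain ⟨z, _, rfl⟩ := hxT
    exact z.2

private lemma card_pow_eq_one_of_dvd {G : Type*} [Group G] [Fintype G] [IsCyclic G]
    [DecidableEq G] {E : ℕ} (hE : 0 < E) (hd : E ∣ Fintype.card G) :
    (Finset.univ.filter fun a : G => a ^ E = 1).card = E := by
  classical
  refine le_antisymm (IsCyclic.card_pow_eq_one_le hE) ?_
  obtain ⟨g, hg⟩ := IsCyclic.exists_ofOrder_eq_natCard (α := G)
  rw [Nat.card_eq_fintype_card] at hg
  set N := Fintype.card G with hN
  have hN0 : 0 < N := Fintype.card_pos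
  set h := g ^ (N / E) with hh
  have horder : orderOf h = E := by
    rw [hh, orderOf_pow, hg, Nat.gcd_eq_right (Nat.div_dvd_of_dvd hd)]
    exact Nat.div_div_self hd hN0.ne'
  have hhE : h ^ E = 1 := by rw [← horder]; exact pow_orderOf_eq_one h
  have hsub : (Subgroup.zpowers h : Set G).toFinset ⊆
      Finset.univ.filter fun a : G => a ^ E = 1 := by
    intro x hx
    rw [Set.mem_toFinset] at hx
    obtain ⟨j, rfl⟩ := hx
    simp only [Finset.mem_filter, Finset.mem_univ, true_and]
    have : (h ^ j) ^ (E : ℕ) = (h ^ (E : ℕ)) ^ j := by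
      rw [← zpow_natCast, ← zpow_mul, mul_comm, zpow_mul, zpow_natCast]
    rw [this, hhE, one_zpow]
  have hcard : (Subgroup.zpowers h : Set G).toFinset.card = E := by
    rw [Set.toFinset_card, ← Nat.card_eq_fintype_card]
    simp only [SetLike.coe_sort_coe]
    rw [Nat.card_zpowers, horder]
  calc E = _ := hcard.symm
    _ ≤ _ := Finset.card_le_card hsub

private lemma field_card_pow_eq_one {F : Type*} [Field F] [Fintype F]
    {E : ℕ} (hE : 0 < E) (hdvd : E ∣ Fintype.card F - 1) :
    Nat.card {x : F // x ^ E = 1} = E := by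
  classical
  have hne : ∀ x : F, x ^ E = 1 → x ≠ 0 := by
    intro x hx h0
    rw [h0, zero_pow hE.ne'] at hx
    exact zero_ne_one hx
  have e : {x : F // x ^ E = 1} ≃ {u : Fˣ // u ^ E = 1} :=
    { toFun := fun x => ⟨Units.mk0 x.1 (hne x.1 x.2),
        Units.ext (by simp [Units.val_pow_eq_pow_val, x.2])⟩
      invFun := fun u => ⟨(u.1 : F), by
        rw [← Units.val_pow_eq_pow_val, u.2, Units.val_one]⟩
      left_inv := fun x => Subtype.ext rfl
      right_inv := fun u => Subtype.ext (Units.ext rfl) }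
  rw [Nat.card_congr e, Nat.card_eq_fintype_card, Fintype.card_subtype]
  refine card_pow_eq_one_of_dvd hE ?_
  rwa [Fintype.card_units]

private lemma gcd_pow_sub_one (q A B : ℕ) (hq : 2 ≤ q) (hA : 0 < A) :
    Nat.gcd (q ^ A - 1) (q ^ B - 1) = q ^ Nat.gcd A B - 1 := by
  have hpow : ∀ C : ℕ, 1 ≤ q ^ C := fun C => Nat.one_le_pow _ _ (by omega)
  have hApos : 0 < q ^ A - 1 := by
    have : 2 ≤ q ^ A := le_trans hq (Nat.le_self_pow hA.ne' q)
    omega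
  set g := Nat.gcd (q ^ A - 1) (q ^ B - 1) with hgdef
  have hcop : Nat.Coprime q g := by
    have h1 : Nat.Coprime (q ^ A) (q ^ A - 1) := by
      have h : 1 + (q ^ A - 1) = q ^ A := by have := hpow A; omega
      have h2 := Nat.coprime_add_self_left.mpr (Nat.coprime_one_left (q ^ A - 1))
      rwa [h] at h2
    have h2 : Nat.Coprime q (q ^ A - 1) :=
      Nat.Coprime.coprime_dvd_left (dvd_pow_self q hA.ne') h1
    exact Nat.Coprime.coprime_dvd_right (Nat.gcd_dvd_left _ _) h2
  set u := ZMod.unitOfCoprime q hcop with hu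
  have keyu : ∀ C : ℕ, g ∣ q ^ C - 1 ↔ u ^ C = 1 := by
    intro C
    rw [Units.ext_iff, Units.val_pow_eq_pow_val, hu, ZMod.coe_unitOfCoprime, Units.val_one,
      ← Nat.cast_pow, show (1 : ZMod g) = ((1 : ℕ) : ZMod g) from (Nat.cast_one).symm,
      ZMod.natCast_eq_natCast_iff]
    exact ⟨fun h => ((Nat.modEq_iff_dvd' (hpow C)).mpr h).symm,
           fun h => (Nat.modEq_iff_dvd' (hpow C)).mp h.symm⟩
  have huA : u ^ A = 1 := (keyu A).mp (Nat.gcd_dvd_left _ _)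
  have huB : u ^ B = 1 := (keyu B).mp (Nat.gcd_dvd_right _ _)
  have hG : g ∣ q ^ Nat.gcd A B - 1 := (keyu _).mpr (pow_gcd_eq_one.mpr ⟨huA, huB⟩)
  have hdvd2 : q ^ Nat.gcd A B - 1 ∣ g := by
    refine Nat.dvd_gcd ?_ ?_
    · obtain ⟨k, hk⟩ := Nat.gcd_dvd_left A B
      have h : q ^ Nat.gcd A B - 1 ∣ q ^ (Nat.gcd A B * k) - 1 := by
        simpa only [one_pow, pow_mul] using Nat.sub_dvd_pow_sub_pow (q ^ Nat.gcd A B) 1 k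
      rwa [← hk] at h
    · obtain ⟨k, hk⟩ := Nat.gcd_dvd_right A B
      have h : q ^ Nat.gcd A B - 1 ∣ q ^ (Nat.gcd A B * k) - 1 := by
        simpa only [one_pow, pow_mul] using Nat.sub_dvd_pow_sub_pow (q ^ Nat.gcd A B) 1 k
      rwa [← hk] at h
  exact Nat.dvd_antisymm hG hdvd2

private lemma coprime_quotients (q A B : ℕ) (hq : 2 ≤ q) (hA : 0 < A) (_hB : 0 < B) :
    Nat.Coprime ((q ^ B - 1) / (q ^ Nat.gcd A B - 1)) ((q ^ A - 1) / (q ^ Nat.gcd A B - 1)) := by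
  have hpow : ∀ C : ℕ, 1 ≤ q ^ C := fun C => Nat.one_le_pow _ _ (by omega)
  set G := Nat.gcd A B with hGdef
  have hGpos : 0 < G := Nat.gcd_pos_of_pos_left _ hA
  have hQg : 1 < q ^ G := Nat.one_lt_pow hGpos.ne' (by omega)
  have hQgpos : 0 < q ^ G - 1 := by omega
  have idA : (q ^ G - 1) * (∑ i ∈ Finset.range (A / G), (q ^ G) ^ i) = q ^ A - 1 := by
    rw [nat_geom_sum _ _ (hpow G), ← pow_mul, Nat.mul_div_cancel' (Nat.gcd_dvd_left A B)]
  have idB : (q ^ G - 1) * (∑ i ∈ Finset.range (B / G), (q ^ G) ^ i) = q ^ B - 1 := by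
    rw [nat_geom_sum _ _ (hpow G), ← pow_mul, Nat.mul_div_cancel' (Nat.gcd_dvd_right A B)]
  have hSA : (q ^ A - 1) / (q ^ G - 1) = ∑ i ∈ Finset.range (A / G), (q ^ G) ^ i := by
    rw [← idA, Nat.mul_div_cancel_left _ hQgpos]
  have hSB : (q ^ B - 1) / (q ^ G - 1) = ∑ i ∈ Finset.range (B / G), (q ^ G) ^ i := by
    rw [← idB, Nat.mul_div_cancel_left _ hQgpos]
  rw [hSA, hSB]
  by_contra hne
  obtain ⟨p, hp, hpdvd⟩ := Nat.exists_prime_and_dvd hne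
  have hpB : p ∣ ∑ i ∈ Finset.range (B / G), (q ^ G) ^ i :=
    dvd_trans hpdvd (Nat.gcd_dvd_left _ _)
  have hpA : p ∣ ∑ i ∈ Finset.range (A / G), (q ^ G) ^ i :=
    dvd_trans hpdvd (Nat.gcd_dvd_right _ _)
  have hpQA : p ∣ q ^ A - 1 := dvd_trans hpA ⟨q ^ G - 1, by rw [← idA]; ring⟩
  have hpQB : p ∣ q ^ B - 1 := dvd_trans hpB ⟨q ^ G - 1, by rw [← idB]; ring⟩
  have hpQg : p ∣ q ^ G - 1 := by
    have h := gcd_pow_sub_one q A B hq hA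
    rw [← hGdef] at h
    rw [← h]
    exact Nat.dvd_gcd hpQA hpQB
  have hq1 : ((q : ZMod p)) ^ G = 1 := by
    rw [← Nat.cast_pow, show (1 : ZMod p) = ((1 : ℕ) : ZMod p) from (Nat.cast_one).symm,
      ZMod.natCast_eq_natCast_iff]
    exact ((Nat.modEq_iff_dvd' (hpow G)).mpr hpQg).symm
  have hcast : ∀ k : ℕ, ((∑ i ∈ Finset.range k, (q ^ G) ^ i : ℕ) : ZMod p) = (k : ZMod p) := by
    intro k
    push_cast
    calc (∑ i ∈ Finset.range k, ((q : ZMod p) ^ G) ^ i)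
        = ∑ _i ∈ Finset.range k, (1 : ZMod p) := by
          refine Finset.sum_congr rfl fun i _ => by rw [hq1, one_pow]
      _ = (k : ZMod p) := by simp
  have hdA : p ∣ A / G := by
    rw [← ZMod.natCast_eq_zero_iff, ← hcast]
    rw [ZMod.natCast_eq_zero_iff]
    exact hpA
  have hdB : p ∣ B / G := by
    rw [← ZMod.natCast_eq_zero_iff, ← hcast]
    rw [ZMod.natCast_eq_zero_iff]
    exact hpB
  have hco : Nat.Coprime (A / G) (B / G) := Nat.coprime_div_gcd_div_gcd hGpos
  have : p ∣ 1 := by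
    rw [← hco]
    exact Nat.dvd_gcd hdA hdB
  exact hp.ne_one (Nat.dvd_one.mp this)

/-- point count of the affine curve `y = xⁿ` with coordinates in possibly
different subfields of a common finite field. With `q` a prime power, `c = gcd(d₁,d₂)`,
and `M = (q^{d₁m} - 1)/(q^{cm} - 1)`, the number of pairs `(x, y)` with
`x ∈ F_{q^{d₁m}}`, `y ∈ F_{q^{d₂m}}` and `y = xⁿ` equals `gcd(n, M)·(q^{cm} - 1) + 1`. -/
theorem curve_point_count (q d₁ d₂ m n : ℕ) (hq : IsPrimePow q)
    (hd₁ : 0 < d₁) (hd₂ : 0 < d₂) (hm : 0 < m) (hn : 0 < n)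
    (c : ℕ) (hc : c = Nat.gcd d₁ d₂)
    (M : ℕ) (hM : M = (q ^ (d₁ * m) - 1) / (q ^ (c * m) - 1))
    (L : Type*) [Field L] [Fintype L] (K₁ K₂ : Subfield L)
    (hK₁ : Nat.card K₁ = q ^ (d₁ * m)) (hK₂ : Nat.card K₂ = q ^ (d₂ * m)) :
    Nat.card {xy : L × L // xy.1 ∈ K₁ ∧ xy.2 ∈ K₂ ∧ xy.2 = xy.1 ^ n} =
      Nat.gcd n M * (q ^ (c * m) - 1) + 1 := by
  classical
  have hq2 : 2 ≤ q := hq.two_le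
  have hApos : 0 < d₁ * m := Nat.mul_pos hd₁ hm
  have hBpos : 0 < d₂ * m := Nat.mul_pos hd₂ hm
  have hGpos : 0 < c * m := Nat.mul_pos (hc ▸ Nat.gcd_pos_of_pos_left _ hd₁) hm
  have hGAB : Nat.gcd (d₁ * m) (d₂ * m) = c * m := by
    rw [Nat.gcd_mul_right, hc]
  have hpow : ∀ C : ℕ, 0 < C → 1 < q ^ C := fun C hC => Nat.one_lt_pow hC.ne' (by omega)
  have hQ₁1 : 1 < q ^ (d₁ * m) := hpow _ hApos
  have hQ₂1 : 1 < q ^ (d₂ * m) := hpow _ hBpos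
  have hQg1 : 1 < q ^ (c * m) := hpow _ hGpos
  have hQgpos : 0 < q ^ (c * m) - 1 := by omega
  -- divisibility identities
  have hGdvdA : (c * m) ∣ (d₁ * m) := by
    rw [← hGAB]; exact Nat.gcd_dvd_left _ _
  have hGdvdB : (c * m) ∣ (d₂ * m) := by
    rw [← hGAB]; exact Nat.gcd_dvd_right _ _
  have idA : (q ^ (c * m) - 1) * (∑ i ∈ Finset.range ((d₁ * m) / (c * m)), (q ^ (c * m)) ^ i)
      = q ^ (d₁ * m) - 1 := by
    rw [nat_geom_sum _ _ (by omega), ← pow_mul, Nat.mul_div_cancel' hGdvdA]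
  have idB : (q ^ (c * m) - 1) * (∑ i ∈ Finset.range ((d₂ * m) / (c * m)), (q ^ (c * m)) ^ i)
      = q ^ (d₂ * m) - 1 := by
    rw [nat_geom_sum _ _ (by omega), ← pow_mul, Nat.mul_div_cancel' hGdvdB]
  set b := (q ^ (d₂ * m) - 1) / (q ^ (c * m) - 1) with hb
  have hQ₁eq : q ^ (d₁ * m) - 1 = M * (q ^ (c * m) - 1) := by
    rw [hM, ← idA, Nat.mul_div_cancel_left _ hQgpos, mul_comm]
  have hQ₂eq : q ^ (d₂ * m) - 1 = b * (q ^ (c * m) - 1) := by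
    rw [hb, ← idB, Nat.mul_div_cancel_left _ hQgpos, mul_comm]
  have hcop : Nat.Coprime b M := by
    rw [hb, hM]
    have h := coprime_quotients q (d₁ * m) (d₂ * m) hq2 hApos hBpos
    rwa [hGAB] at h
  set E := Nat.gcd (n * (q ^ (d₂ * m) - 1)) (q ^ (d₁ * m) - 1) with hE
  have hEval : E = Nat.gcd n M * (q ^ (c * m) - 1) := by
    rw [hE, hQ₁eq, hQ₂eq, ← mul_assoc, Nat.gcd_mul_right,
      Nat.Coprime.gcd_mul_right_cancel n hcop]
  have hEpos : 0 < E := Nat.gcd_pos_of_pos_right _ (by omega)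
  have hEdvdA : E ∣ q ^ (d₁ * m) - 1 := Nat.gcd_dvd_right _ _
  have hEdvdn : E ∣ n * (q ^ (d₂ * m) - 1) := Nat.gcd_dvd_left _ _
  -- membership from the equation
  have mem_of_pow : ∀ x : L, x ^ E = 1 → x ∈ K₁ := by
    intro x hx
    rw [mem_subfield_iff_pow, hK₁]
    obtain ⟨k, hk⟩ := hEdvdA
    have h1 : x ^ (q ^ (d₁ * m) - 1) = 1 := by
      rw [hk, pow_mul, hx, one_pow]
    calc x ^ q ^ (d₁ * m) = x ^ (q ^ (d₁ * m) - 1) * x := by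
          rw [← pow_succ, Nat.sub_add_cancel (by omega)]
      _ = x := by rw [h1, one_mul]
  have memn_of_pow : ∀ x : L, x ^ E = 1 → x ^ n ∈ K₂ := by
    intro x hx
    rw [mem_subfield_iff_pow, hK₂]
    obtain ⟨k, hk⟩ := hEdvdn
    have h2 : x ^ (n * (q ^ (d₂ * m) - 1)) = 1 := by
      rw [hk, pow_mul, hx, one_pow]
    calc (x ^ n) ^ q ^ (d₂ * m) = (x ^ n) ^ (q ^ (d₂ * m) - 1) * x ^ n := by
          rw [← pow_succ, Nat.sub_add_cancel (by omega)]
      _ = x ^ n := by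
          rw [← pow_mul, h2, one_mul]
  have key : ∀ x : L, (x ∈ K₁ ∧ x ^ n ∈ K₂) ↔ (x = 0 ∨ x ^ E = 1) := by
    intro x
    constructor
    · rintro ⟨hx1, hx2⟩
      by_cases h0 : x = 0
      · exact Or.inl h0
      right
      have e1 : x ^ (q ^ (d₁ * m)) = x := by
        rw [← hK₁]; exact (mem_subfield_iff_pow K₁ x).mp hx1
      have e1' : x ^ (q ^ (d₁ * m) - 1) = 1 := by
        have h : x ^ (q ^ (d₁ * m) - 1) * x = 1 * x := by
          rw [one_mul, ← pow_succ, Nat.sub_add_cancel (by omega)]; exact e1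
        exact mul_right_cancel₀ h0 h
      have e2 : (x ^ n) ^ (q ^ (d₂ * m)) = x ^ n := by
        rw [← hK₂]; exact (mem_subfield_iff_pow K₂ _).mp hx2
      have hxn0 : x ^ n ≠ 0 := pow_ne_zero _ h0
      have e2' : (x ^ n) ^ (q ^ (d₂ * m) - 1) = 1 := by
        have h : (x ^ n) ^ (q ^ (d₂ * m) - 1) * x ^ n = 1 * x ^ n := by
          rw [one_mul, ← pow_succ, Nat.sub_add_cancel (by omega)]; exact e2
        exact mul_right_cancel₀ hxn0 h
      have e2'' : x ^ (n * (q ^ (d₂ * m) - 1)) = 1 := by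
        rw [pow_mul]; exact e2'
      exact pow_gcd_eq_one.mpr ⟨e2'', e1'⟩
    · rintro (rfl | hx)
      · exact ⟨K₁.zero_mem, by rw [zero_pow hn.ne']; exact K₂.zero_mem⟩
      · exact ⟨mem_of_pow x hx, memn_of_pow x hx⟩
  -- reduce pairs to single variable
  have e0 : {xy : L × L // xy.1 ∈ K₁ ∧ xy.2 ∈ K₂ ∧ xy.2 = xy.1 ^ n} ≃
      {x : L // x ∈ K₁ ∧ x ^ n ∈ K₂} :=
    { toFun := fun p => ⟨p.1.1, p.2.1, by rw [← p.2.2.2]; exact p.2.2.1⟩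
      invFun := fun x => ⟨(x.1, x.1 ^ n), x.2.1, x.2.2, rfl⟩
      left_inv := fun p => Subtype.ext (by
        obtain ⟨⟨x, y⟩, h⟩ := p
        simp only
        rw [← h.2.2])
      right_inv := fun x => rfl }
  rw [Nat.card_congr (e0.trans (Equiv.subtypeEquivRight key))]
  -- split off zero
  have h0E : ¬ ((0 : L) ^ E = 1) := by
    rw [zero_pow hEpos.ne']
    exact zero_ne_one
  rw [Nat.card_eq_fintype_card, Fintype.card_subtype]
  have hfilter : (Finset.univ.filter fun x : L => x = 0 ∨ x ^ E = 1)
      = insert (0 : L) (Finset.univ.filter fun x : L => x ^ E = 1) := by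
    ext x
    simp only [Finset.mem_filter, Finset.mem_univ, true_and, Finset.mem_insert]
  rw [hfilter, Finset.card_insert_of_notMem (by simp [h0E])]
  -- count the solutions of x^E = 1 inside K₁
  have hcardK₁ : Fintype.card K₁ = q ^ (d₁ * m) := by
    rw [← Nat.card_eq_fintype_card]; exact hK₁
  have etrans : {x : L // x ^ E = 1} ≃ {y : K₁ // y ^ E = 1} :=
    { toFun := fun x => ⟨⟨x.1, mem_of_pow x.1 x.2⟩, by
        apply Subtype.ext
        simpa using x.2⟩
      invFun := fun y => ⟨(y.1 : L), by
        have h := congrArg Subtype.val y.2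
        simpa using h⟩
      left_inv := fun x => Subtype.ext rfl
      right_inv := fun y => Subtype.ext (Subtype.ext rfl) }
  have hcount : (Finset.univ.filter fun x : L => x ^ E = 1).card = E := by
    have h1 : Nat.card {x : L // x ^ E = 1} = E := by
      rw [Nat.card_congr etrans]
      exact field_card_pow_eq_one hEpos (by rw [hcardK₁]; exact hEdvdA)
    rwa [Nat.card_eq_fintype_card, Fintype.card_subtype] at h1
  rw [hcount, hEval]
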